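/- Let H(s) = C(sE − A)⁻¹B (with D = 0). Given r distinct right interpolation points σ₁, …, σ_r with directions r₁, …, r_r ∈ ℂᵐ and r distinct left interpolation points μ₁, …, μ_r with directions ℓ₁, …, ℓ_r ∈ ℂᵖ (all σᵢE − A, μᵢE − A invertible), let V have columns (σᵢE − A)⁻¹Brᵢ and W have columns (μᵢE − A)⁻ᵀCᵀℓᵢ. Let R̃ = [r₁, …, r_r] ∈ ℂᵐˣʳ and L̃ᵀ = [ℓ₁, …, ℓ_r]ᵀ. For any D_r ∈ ℂᵖˣᵐ define E_r = WᵀEV, A_r = WᵀAV + L̃ᵀ D_r R̃, B_r = WᵀB − L̃ᵀD_r, C_r = CV − D_r R̃, and H_r(s) = C_r(sE_r − A_r)⁻¹B_r + D_r. Then for each i with σᵢE_r − A_r invertible, H(σᵢ)rᵢ = H_r(σᵢ)rᵢ, and for each i with μᵢE_r − A_r invertible, ℓᵢᵀH(μᵢ) = ℓᵢᵀH_r(μᵢ). -/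

import Mathlib

open Matrix
open scoped Matrix

private lemma vecMul_smulMat {k l : ℕ} (a : ℂ) (M : Matrix (Fin k) (Fin l) ℂ)
    (x : Fin k → ℂ) : x ᵥ* (a • M) = a • (x ᵥ* M) := by
  rw [← mulVec_transpose, transpose_smul, smul_mulVec, mulVec_transpose]

/-- Rational tangential interpolants with an arbitrary `D_r` term
(Mayo–Antoulas / Beattie–Gugercin construction): with interpolatory bases `V, W`
and modified reduced matrices
`E_r = WᵀEV`, `A_r = WᵀAV + L̃ᵀ D_r R̃`, `B_r = WᵀB - L̃ᵀ D_r`, `C_r = CV - D_r R̃`,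
the reduced model `H_r(s) = C_r (sE_r - A_r)⁻¹ B_r + D_r` tangentially interpolates
`H(s) = C (sE - A)⁻¹ B` at the right data `(σᵢ, rᵢ)` and the left data `(μᵢ, ℓᵢ)`. -/
theorem interpolation_with_arbitrary_Dr
    {n m p rr : ℕ}
    (E A : Matrix (Fin n) (Fin n) ℂ) (B : Matrix (Fin n) (Fin m) ℂ)
    (C : Matrix (Fin p) (Fin n) ℂ)
    (σs μs : Fin rr → ℂ)
    (hσdist : Function.Injective σs) (hμdist : Function.Injective μs)
    (hσ : ∀ i, IsUnit ((σs i) • E - A).det)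
    (hμ : ∀ i, IsUnit ((μs i) • E - A).det)
    (rs : Fin rr → Fin m → ℂ) (ls : Fin rr → Fin p → ℂ)
    (V W : Matrix (Fin n) (Fin rr) ℂ)
    (hV : V = Matrix.of fun i j => (((σs j) • E - A)⁻¹ *ᵥ (B *ᵥ rs j)) i)
    (hW : W = Matrix.of fun i j => ((((μs j) • E - A)ᵀ)⁻¹ *ᵥ (Cᵀ *ᵥ ls j)) i)
    (Rt : Matrix (Fin m) (Fin rr) ℂ) (hRt : Rt = Matrix.of fun i j => rs j i)
    (Lt : Matrix (Fin rr) (Fin p) ℂ) (hLt : Lt = Matrix.of fun i j => ls i j)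
    (Dr : Matrix (Fin p) (Fin m) ℂ)
    (Er Ar : Matrix (Fin rr) (Fin rr) ℂ)
    (Br : Matrix (Fin rr) (Fin m) ℂ) (Cr : Matrix (Fin p) (Fin rr) ℂ)
    (hEr : Er = Wᵀ * E * V)
    (hAr : Ar = Wᵀ * A * V + Lt * Dr * Rt)
    (hBr : Br = Wᵀ * B - Lt * Dr)
    (hCr : Cr = C * V - Dr * Rt) :
    (∀ i : Fin rr, IsUnit ((σs i) • Er - Ar).det →
        (C * ((σs i) • E - A)⁻¹ * B) *ᵥ rs i
          = (Cr * ((σs i) • Er - Ar)⁻¹ * Br + Dr) *ᵥ rs i) ∧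
    (∀ i : Fin rr, IsUnit ((μs i) • Er - Ar).det →
        ls i ᵥ* (C * ((μs i) • E - A)⁻¹ * B)
          = ls i ᵥ* (Cr * ((μs i) • Er - Ar)⁻¹ * Br + Dr)) := by
  constructor
  · -- right tangential interpolation
    intro i hinv
    set e : Fin rr → ℂ := Pi.single i 1 with he
    have hVe : V *ᵥ e = ((σs i) • E - A)⁻¹ *ᵥ (B *ᵥ rs i) := by
      subst hV; rw [he, mulVec_single_one]; rfl
    have hRe : Rt *ᵥ e = rs i := by
      subst hRt; rw [he, mulVec_single_one]; rfl
    have hKV : ((σs i) • E - A) *ᵥ (V *ᵥ e) = B *ᵥ rs i := by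
      rw [hVe, mulVec_mulVec, mul_nonsing_inv _ (hσ i), one_mulVec]
    have hsub : (σs i) • (E *ᵥ (V *ᵥ e)) - A *ᵥ (V *ᵥ e) = B *ᵥ rs i := by
      rw [← smul_mulVec, ← sub_mulVec]; exact hKV
    have key : ((σs i) • Er - Ar) *ᵥ e = Br *ᵥ rs i := by
      rw [hEr, hAr, hBr, sub_mulVec, add_mulVec, smul_mulVec, sub_mulVec]
      simp only [← mulVec_mulVec, hRe]
      rw [sub_add_eq_sub_sub, ← mulVec_smul, ← mulVec_sub, hsub]
    have hinvKey : ((σs i) • Er - Ar)⁻¹ *ᵥ (Br *ᵥ rs i) = e := by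
      rw [← key, mulVec_mulVec, nonsing_inv_mul _ hinv, one_mulVec]
    rw [add_mulVec]
    simp only [← mulVec_mulVec]
    rw [hinvKey, hCr, sub_mulVec]
    simp only [← mulVec_mulVec, hRe, hVe]
    abel
  · -- left tangential interpolation
    intro i hinv
    set e : Fin rr → ℂ := Pi.single i 1 with he
    have hWe : W *ᵥ e = (((μs i) • E - A)ᵀ)⁻¹ *ᵥ (Cᵀ *ᵥ ls i) := by
      subst hW; rw [he, mulVec_single_one]; rfl
    have hLe : e ᵥ* Lt = ls i := by
      subst hLt; rw [he, single_one_vecMul]; rfl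
    have heW : e ᵥ* Wᵀ = W *ᵥ e := vecMul_transpose W e
    have hWM : (W *ᵥ e) ᵥ* ((μs i) • E - A) = ls i ᵥ* C := by
      rw [hWe, ← mulVec_transpose]
      rw [mulVec_mulVec, mul_nonsing_inv _ (by rw [det_transpose]; exact hμ i), one_mulVec,
        mulVec_transpose]
    have hsubL : (μs i) • ((W *ᵥ e) ᵥ* E) - (W *ᵥ e) ᵥ* A = ls i ᵥ* C := by
      rw [← hWM, vecMul_sub, vecMul_smulMat]
    have key : e ᵥ* ((μs i) • Er - Ar) = ls i ᵥ* Cr := by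
      rw [hEr, hAr, hCr, vecMul_sub, vecMul_smulMat, vecMul_add, vecMul_sub]
      simp only [← vecMul_vecMul]
      rw [heW, hLe, sub_add_eq_sub_sub, ← smul_vecMul, ← sub_vecMul, hsubL]
    have hinvKey : (ls i ᵥ* Cr) ᵥ* ((μs i) • Er - Ar)⁻¹ = e := by
      rw [← key, vecMul_vecMul, mul_nonsing_inv _ hinv, vecMul_one]
    have hw2 : (ls i ᵥ* C) ᵥ* ((μs i) • E - A)⁻¹ = W *ᵥ e := by
      rw [← hWM, vecMul_vecMul, mul_nonsing_inv _ (hμ i), vecMul_one]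
    rw [vecMul_add]
    simp only [← vecMul_vecMul]
    rw [hinvKey, hBr, vecMul_sub]
    simp only [← vecMul_vecMul]
    rw [heW, hLe, hw2]
    abel
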